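/- For every alphabet of size c and every function g : ℕ → ℕ, there is a natural number H(c, g) such that every finite sequence w_1, ..., w_{H(c,g)} of words over the alphabet with |w_i| ≤ g(i) for all i contains indices l < k with w_l a subsequence of w_k. -/

import Mathlib

open CategoryTheory

/-- Infinite Higman's lemma for `Sublist` over a finite alphabet. -/
lemma higman_infinite (A : Type) [Fintype A] (f : ℕ → List A) :
    ∃ l k : ℕ, l < k ∧ (f l).Sublist (f k) := by
  have hpwo : (Set.univ : Set A).PartiallyWellOrderedOn (· = ·) :=
    Set.finite_univ.partiallyWellOrderedOn
  have h := hpwo.partiallyWellOrderedOn_sublistForall₂ (r := (· = ·))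
  obtain ⟨l, k, hlk, hsub⟩ := h.exists_lt (f := f) (fun n => by simp)
  refine ⟨l, k, hlk, ?_⟩
  obtain ⟨l', h1, h2⟩ := List.sublistForall₂_iff.1 hsub
  have : f l = l' := by rwa [List.forall₂_eq_eq_eq] at h1
  rwa [this]

theorem higman_effective (A : Type) [Fintype A] (g : ℕ → ℕ) :
    ∃ H : ℕ, ∀ w : Fin H → List A,
      (∀ i : Fin H, (w i).length ≤ g (i.1 + 1)) →
      ∃ l k : Fin H, l < k ∧ (w l).Sublist (w k) := by
  by_contra hcon
  push_neg at hcon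
  -- bad bounded sequences of length n
  let P : (n : ℕ) → (Fin n → List A) → Prop := fun n w =>
    (∀ i : Fin n, (w i).length ≤ g (i.1 + 1)) ∧
      ∀ l k : Fin n, l < k → ¬ (w l).Sublist (w k)
  let X : ℕ → Type := fun n => { w : Fin n → List A // P n w }
  have hne : ∀ n, Nonempty (X n) := by
    intro n
    obtain ⟨w, hw1, hw2⟩ := hcon n
    exact ⟨⟨w, hw1, fun l k hlk hs => hw2 l k hlk hs⟩⟩
  have hfin : ∀ n, Finite (X n) := by
    intro n
    have : ∀ i : Fin n, Finite {l : List A | l.length ≤ g (i.1 + 1)} :=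
      fun i => (List.finite_length_le A (g (i.1 + 1))).to_subtype
    refine Finite.of_injective
      (fun w : X n => fun i : Fin n => (⟨w.1 i, w.2.1 i⟩ : {l : List A | l.length ≤ g (i.1 + 1)}))
      ?_
    intro w w' h
    apply Subtype.ext
    funext i
    exact congrArg Subtype.val (congrFun h i)
  -- the inverse system of restrictions
  let F : ℕᵒᵖ ⥤ Type := {
    obj := fun n => X n.unop
    map := fun {n m} f => TypeCat.ofHom fun w =>
      ⟨fun i => w.1 ⟨i.1, lt_of_lt_of_le i.2 (leOfHom f.unop)⟩,
        fun i => w.2.1 _,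
        fun l k hlk hs => w.2.2 _ _ (by exact hlk) hs⟩
    map_id := fun n => rfl
    map_comp := fun f g => rfl }
  haveI : ∀ j : ℕᵒᵖ, Finite (F.obj j) := fun j => hfin j.unop
  haveI : ∀ j : ℕᵒᵖ, Nonempty (F.obj j) := fun j => hne j.unop
  obtain ⟨s, hs⟩ := nonempty_sections_of_finite_inverse_system F
  -- extract the infinite sequence
  let f : ℕ → List A := fun n => (s (Opposite.op (n + 1))).1 ⟨n, Nat.lt_succ_self n⟩
  have hcompat : ∀ (m n : ℕ) (h : m < n), (s (Opposite.op n)).1 ⟨m, h⟩ = f m := by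
    intro m n h
    have := @hs (Opposite.op n) (Opposite.op (m + 1))
      (Opposite.op (homOfLE (Nat.succ_le_of_lt h) : (m+1 : ℕ) ⟶ n))
    have := congrArg Subtype.val this
    have := congrFun this ⟨m, Nat.lt_succ_self m⟩
    simpa [F, X] using this
  obtain ⟨l, k, hlk, hsub⟩ := higman_infinite A f
  have hbad := (s (Opposite.op (k + 1))).2.2 ⟨l, Nat.lt_succ_of_lt hlk⟩
    ⟨k, Nat.lt_succ_self k⟩ (by exact hlk)
  rw [hcompat l (k+1) (Nat.lt_succ_of_lt hlk)] at hbad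
  exact hbad (hcompat k (k+1) (Nat.lt_succ_self k) ▸ hsub)
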